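/- arXiv:2106.05666 — 5 statements merged into one kernel-verified Lean document; each statement's English description precedes it below -/
import Mathlib

section
/- Let M be a finite abelian group and S, T : M → M commuting endomorphisms. Then the ordinary projectors satisfy e(S ∘ T) = e(S) ∘ e(T), where e(U) denotes the idempotent lim_n U^(n!). -/
/-- For commuting endomorphisms `S`, `T` of a finite abelian group,
the ordinary projectors satisfy `e(S ∘ T) = e(S) ∘ e(T)`, where `e(U)` is the
eventual value of the sequence `U^(n!)`. -/
theorem stmt3 (M : Type*) [AddCommGroup M] [Finite M] (S T : AddMonoid.End M)
    (hST : Commute S T) (N₁ N₂ N₃ : ℕ)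
    (hS : ∀ n : ℕ, N₁ ≤ n → S ^ n.factorial = S ^ N₁.factorial)
    (hT : ∀ n : ℕ, N₂ ≤ n → T ^ n.factorial = T ^ N₂.factorial)
    (hST' : ∀ n : ℕ, N₃ ≤ n → (S * T) ^ n.factorial = (S * T) ^ N₃.factorial) :
    (S * T) ^ N₃.factorial = S ^ N₁.factorial * T ^ N₂.factorial := by
  set n := max N₁ (max N₂ N₃) with hn
  rw [← hST' n (le_max_of_le_right (le_max_right _ _)), hST.mul_pow,
    hS n (le_max_left _ _), hT n (le_max_of_le_right (le_max_left _ _))]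
end

section
/- Let M, N be finite abelian groups and f : M → N, g : N → M homomorphisms. Then f restricts to an isomorphism from e(g∘f)(M) onto e(f∘g)(N), with inverse induced by g composed with an appropriate power of f∘g. -/
/-- If the factorial iterates of `u` stabilize at `N`, then each stabilized iterate is
idempotent. -/
lemma iter_fact_idem {X : Type*} (u : X → X) (Nn : ℕ)
    (h : ∀ n : ℕ, Nn ≤ n → u^[n.factorial] = u^[Nn.factorial])
    (n : ℕ) (hn : Nn ≤ n) :
    u^[n.factorial] ∘ u^[n.factorial] = u^[n.factorial] := by
  have h1 : u^[(n+1).factorial] = u^[n.factorial] := by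
    rw [h (n+1) (by omega), h n hn]
  have h2 : u^[(n+2).factorial] = u^[n.factorial] := by
    rw [h (n+2) (by omega), h n hn]
  have e1 : (u^[n.factorial])^[n+1] = u^[n.factorial] := by
    rw [← Function.iterate_mul]
    have hh : n.factorial * (n+1) = (n+1).factorial := by
      rw [Nat.factorial_succ]; ring
    rw [hh]; exact h1
  have e2 : (u^[n.factorial])^[(n+1)*(n+2)] = u^[n.factorial] := by
    rw [← Function.iterate_mul]
    have hh : n.factorial * ((n+1)*(n+2)) = (n+2).factorial := by
      rw [Nat.factorial_succ, Nat.factorial_succ]; ring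
    rw [hh]; exact h2
  have e3 : (u^[n.factorial])^[n+2] = u^[n.factorial] := by
    calc (u^[n.factorial])^[n+2] = ((u^[n.factorial])^[n+1])^[n+2] := by rw [e1]
      _ = (u^[n.factorial])^[(n+1)*(n+2)] := by rw [← Function.iterate_mul]
      _ = u^[n.factorial] := e2
  calc u^[n.factorial] ∘ u^[n.factorial]
      = u^[n.factorial] ∘ (u^[n.factorial])^[n+1] := by rw [e1]
    _ = (u^[n.factorial])^[n+2] := by rw [← Function.iterate_succ']
    _ = u^[n.factorial] := e3

/-- For homomorphisms `f : M → N`, `g : N → M` of finite abelian groups, `f` restricts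
to an isomorphism from `e(g∘f)(M)` onto `e(f∘g)(N)`, with inverse induced by `g`
composed with an appropriate power of `f∘g`.  Here `e(U)` is the ordinary projector,
i.e. the eventual value of the iterates `U^(n!)`. -/
theorem stmt4 (M N : Type*) [AddCommGroup M] [AddCommGroup N] [Finite M] [Finite N]
    (f : M →+ N) (g : N →+ M) (N₁ N₂ : ℕ)
    (h₁ : ∀ n : ℕ, N₁ ≤ n →
      (⇑(g.comp f))^[n.factorial] = (⇑(g.comp f))^[N₁.factorial])
    (h₂ : ∀ n : ℕ, N₂ ≤ n →
      (⇑(f.comp g))^[n.factorial] = (⇑(f.comp g))^[N₂.factorial]) :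
    Set.BijOn ⇑f (Set.range ((⇑(g.comp f))^[N₁.factorial]))
      (Set.range ((⇑(f.comp g))^[N₂.factorial])) ∧
    ∃ k : ℕ,
      (∀ x ∈ Set.range ((⇑(g.comp f))^[N₁.factorial]),
        g ((⇑(f.comp g))^[k] (f x)) = x) ∧
      (∀ y ∈ Set.range ((⇑(f.comp g))^[N₂.factorial]),
        f (g ((⇑(f.comp g))^[k] y)) = y) := by
  set u : M → M := ⇑(g.comp f) with hu
  set v : N → N := ⇑(f.comp g) with hv
  set P := (max N₁ N₂).factorial with hPdef
  have hPpos : 1 ≤ P := Nat.factorial_pos _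
  set k := P - 1 with hkdef
  have hk : k + 1 = P := by omega
  have hE : u^[P] = u^[N₁.factorial] := h₁ _ (le_max_left _ _)
  have hF : v^[P] = v^[N₂.factorial] := h₂ _ (le_max_right _ _)
  have hEi : u^[P] ∘ u^[P] = u^[P] := iter_fact_idem u N₁ h₁ _ (le_max_left _ _)
  have hFi : v^[P] ∘ v^[P] = v^[P] := iter_fact_idem v N₂ h₂ _ (le_max_right _ _)
  -- semiconjugacy facts
  have sf : ∀ (m : ℕ) (x : M), f (u^[m] x) = v^[m] (f x) := by
    intro m x
    have : Function.Semiconj (⇑f) u v := fun y => rfl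
    exact this.iterate_right m x
  have sg : ∀ (m : ℕ) (y : N), g (v^[m] y) = u^[m] (g y) := by
    intro m y
    have : Function.Semiconj (⇑g) v u := fun z => rfl
    exact this.iterate_right m y
  -- left inverse on range
  have leftInv : ∀ x ∈ Set.range (u^[N₁.factorial]), g (v^[k] (f x)) = x := by
    rintro x ⟨w, rfl⟩
    rw [← hE]
    calc g (v^[k] (f (u^[P] w))) = u^[k] (g (f (u^[P] w))) := sg k _
      _ = u^[k] (u^[1] (u^[P] w)) := by
          simp only [Function.iterate_one]
          rfl
      _ = u^[k + 1 + P] w := by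
          rw [Function.iterate_add_apply, Function.iterate_add_apply]
      _ = u^[P] (u^[P] w) := by rw [hk, Function.iterate_add_apply]
      _ = u^[P] w := congrFun hEi w
  -- right inverse on range
  have rightInv : ∀ y ∈ Set.range (v^[N₂.factorial]), f (g (v^[k] y)) = y := by
    rintro y ⟨w, rfl⟩
    rw [← hF]
    calc f (g (v^[k] (v^[P] w))) = v^[1] (v^[k] (v^[P] w)) := rfl
      _ = v^[1 + k + P] w := by
          rw [Function.iterate_add_apply, Function.iterate_add_apply]
      _ = v^[P] (v^[P] w) := by
          rw [(by omega : 1 + k + P = P + P), Function.iterate_add_apply]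
      _ = v^[P] w := congrFun hFi w
  refine ⟨⟨?_, ?_, ?_⟩, k, leftInv, rightInv⟩
  · -- MapsTo
    rintro x ⟨w, rfl⟩
    rw [← hE, ← hF]
    exact ⟨f w, (sf P w).symm⟩
  · -- InjOn
    intro x hx x' hx' hfx
    rw [← leftInv x hx, ← leftInv x' hx', hfx]
  · -- SurjOn
    rintro y hy
    obtain ⟨w, rfl⟩ := hy
    refine ⟨g (v^[k] (v^[N₂.factorial] w)), ?_, rightInv _ ⟨w, rfl⟩⟩
    rw [← hE, ← hF]
    refine ⟨g (v^[k] w), ?_⟩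
    calc u^[P] (g (v^[k] w)) = g (v^[P] (v^[k] w)) := (sg P _).symm
      _ = g (v^[P + k] w) := by rw [Function.iterate_add_apply]
      _ = g (v^[k] (v^[P] w)) := by rw [Nat.add_comm, Function.iterate_add_apply]
end

section
/- Let k be a finite field, V and W finite-dimensional k-vector spaces, B : V × W → k a perfect bilinear pairing, and S : V → V, T : W → W linear maps that are adjoint, i.e. B(Sv, w) = B(v, Tw) for all v, w. Then B(e(S)v, w) = B(v, e(T)w) for all v, w, and the restriction of B to e(S)(V) × e(T)(W) is a perfect pairing. -/
private theorem pow_adj' {k V W : Type*} [Field k] [AddCommGroup V] [Module k V]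
    [AddCommGroup W] [Module k W] (B : V →ₗ[k] W →ₗ[k] k)
    (S : Module.End k V) (T : Module.End k W)
    (hadj : ∀ v w, B (S v) w = B v (T w)) :
    ∀ n : ℕ, ∀ v w, B ((S ^ n) v) w = B v ((T ^ n) w) := by
  intro n
  induction n with
  | zero => simp
  | succ n ih =>
    intro v w
    rw [pow_succ, pow_succ']
    simp only [Module.End.mul_apply]
    rw [ih (S v) w, hadj]

private theorem ker_stab {k V : Type*} [Field k] [AddCommGroup V] [Module k V]
    (e : Module.End k V) (M : ℕ) (hM : 2 ≤ M) (he : e ^ M = e) :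
    ∀ x, e (e x) = 0 → e x = 0 := by
  intro x hx
  have h2 : M - 2 + 2 = M := by omega
  calc e x = (e ^ M) x := by rw [he]
    _ = (e ^ (M - 2) * e ^ 2) x := by rw [← pow_add, h2]
    _ = (e ^ (M - 2)) ((e ^ 2) x) := rfl
    _ = 0 := by
        have : (e ^ 2) x = 0 := by rw [pow_two]; exact hx
        rw [this]; simp

/-- For a perfect pairing `B` between finite-dimensional vector spaces over a finite field,
and adjoint operators `S`, `T`, the ordinary projectors `e(S) = S^(N!)` (eventual value of
`S^(n!)`) and `e(T)` are adjoint, and `B` restricts to a perfect pairing between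
`e(S)(V)` and `e(T)(W)`. -/
theorem stmt5 (k V W : Type*) [Field k] [Finite k] [AddCommGroup V] [Module k V]
    [FiniteDimensional k V] [AddCommGroup W] [Module k W] [FiniteDimensional k W]
    (B : V →ₗ[k] W →ₗ[k] k)
    (hperf₁ : ∀ v, (∀ w, B v w = 0) → v = 0)
    (hperf₂ : ∀ w, (∀ v, B v w = 0) → w = 0)
    (S : Module.End k V) (T : Module.End k W)
    (hadj : ∀ v w, B (S v) w = B v (T w))
    (NS NT : ℕ)
    (hS : ∀ n : ℕ, NS ≤ n → S ^ n.factorial = S ^ NS.factorial)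
    (hT : ∀ n : ℕ, NT ≤ n → T ^ n.factorial = T ^ NT.factorial) :
    (∀ v w, B ((S ^ NS.factorial) v) w = B v ((T ^ NT.factorial) w)) ∧
    (∀ v ∈ Set.range ⇑(S ^ NS.factorial),
      (∀ w ∈ Set.range ⇑(T ^ NT.factorial), B v w = 0) → v = 0) ∧
    (∀ w ∈ Set.range ⇑(T ^ NT.factorial),
      (∀ v ∈ Set.range ⇑(S ^ NS.factorial), B v w = 0) → w = 0) := by
  have key : ∀ v w, B ((S ^ NS.factorial) v) w = B v ((T ^ NT.factorial) w) := by
    intro v w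
    have h1 : S ^ (max NS NT).factorial = S ^ NS.factorial := hS _ (le_max_left _ _)
    have h2 : T ^ (max NS NT).factorial = T ^ NT.factorial := hT _ (le_max_right _ _)
    rw [← h1, ← h2, pow_adj' B S T hadj]
  have heS : (S ^ NS.factorial) ^ ((NS + 1) * (NS + 2)) = S ^ NS.factorial := by
    rw [← pow_mul]
    have h : NS.factorial * ((NS + 1) * (NS + 2)) = (NS + 2).factorial := by
      rw [Nat.factorial_succ, Nat.factorial_succ]; ring
    rw [h]; exact hS _ (by omega)
  have heT : (T ^ NT.factorial) ^ ((NT + 1) * (NT + 2)) = T ^ NT.factorial := by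
    rw [← pow_mul]
    have h : NT.factorial * ((NT + 1) * (NT + 2)) = (NT + 2).factorial := by
      rw [Nat.factorial_succ, Nat.factorial_succ]; ring
    rw [h]; exact hT _ (by omega)
  have kerS := ker_stab (S ^ NS.factorial) _ (by nlinarith) heS
  have kerT := ker_stab (T ^ NT.factorial) _ (by nlinarith) heT
  refine ⟨key, ?_, ?_⟩
  · rintro v ⟨x, rfl⟩ hvw
    apply kerS
    apply hperf₁
    intro w
    rw [key]
    exact hvw _ ⟨w, rfl⟩
  · rintro w ⟨y, rfl⟩ hvw
    apply kerT
    apply hperf₂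
    intro v
    rw [← key]
    exact hvw _ ⟨v, rfl⟩
end

section
/- Let F be a totally real number field with set of real embeddings Σ, and let a : Σ → ℤ. Suppose that ∏_{σ∈Σ} σ(ε)^{a_σ} = 1 for every totally positive unit ε of O_F. Then a is constant, i.e. a_σ = a_τ for all σ, τ ∈ Σ. -/
set_option maxHeartbeats 1000000


open NumberField

section Aux

open NumberField.InfinitePlace NumberField.Units NumberField.Units.dirichletUnitTheorem

open scoped Classical in
lemma aux_sum_split (F : Type*) [Field F] [NumberField F] (g : InfinitePlace F → ℝ) :
    ∑ w, g w = g (w₀ : InfinitePlace F) +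
      ∑ w' : {w : InfinitePlace F // w ≠ w₀}, g w'.1 := by
  rw [← Finset.add_sum_erase Finset.univ g (Finset.mem_univ (w₀ : InfinitePlace F))]
  congr 1
  exact (Finset.sum_subtype (p := fun w => w ≠ w₀) _
    (fun w => ⟨fun h => (Finset.mem_erase.mp h).1,
      fun h => Finset.mem_erase.mpr ⟨h, Finset.mem_univ w⟩⟩) g)

end Aux

/-- If a family of integer exponents `a : Σ → ℤ` over the real embeddings of a totally
real number field `F` satisfies `∏_σ σ(ε)^(a σ) = 1` for every totally positive unit
`ε` of `O_F`, then `a` is constant. -/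
theorem stmt10 (F : Type*) [Field F] [NumberField F] [Fintype (F →+* ℝ)]
    (htr : ∀ φ : F →+* ℂ, ∀ x : F, (φ x).im = 0)
    (a : (F →+* ℝ) → ℤ)
    (ha : ∀ ε : (𝓞 F)ˣ, (∀ σ : F →+* ℝ, 0 < σ (algebraMap (𝓞 F) F (ε : 𝓞 F))) →
      ∏ σ : F →+* ℝ, σ (algebraMap (𝓞 F) F (ε : 𝓞 F)) ^ a σ = 1) :
    ∀ σ τ : F →+* ℝ, a σ = a τ := by
  classical
  open NumberField.InfinitePlace NumberField.Units NumberField.Units.dirichletUnitTheorem in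
  -- every complex embedding is real
  have hφreal : ∀ φ : F →+* ℂ, ComplexEmbedding.IsReal φ := by
    intro φ
    rw [ComplexEmbedding.isReal_iff]
    ext x
    exact Complex.conj_eq_iff_im.mpr (htr φ x)
  have hreal : ∀ w : InfinitePlace F, IsReal w := fun w =>
    isReal_iff.mpr (hφreal _)
  have hmult : ∀ w : InfinitePlace F, (mult w : ℝ) = 1 := by
    intro w
    simp [mult, hreal w]
  -- the bijection between infinite places and real embeddings
  set r : InfinitePlace F → (F →+* ℝ) := fun w => embedding_of_isReal (hreal w) with hr
  have hrw : ∀ (w : InfinitePlace F) (x : F), |r w x| = w x := by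
    intro w x
    rw [← Real.norm_eq_abs]
    exact norm_embedding_of_isReal (hreal w) x
  have hrinj : Function.Injective r := by
    intro w w' h
    apply Subtype.ext
    apply AbsoluteValue.ext
    intro x
    have := hrw w x
    rw [h, hrw w' x] at this
    exact this.symm
  have hrsurj : Function.Surjective r := by
    intro σ
    set φ : F →+* ℂ := Complex.ofRealHom.comp σ with hφ
    have hφr : ComplexEmbedding.IsReal φ := hφreal φ
    refine ⟨InfinitePlace.mk φ, ?_⟩
    have hemb : (InfinitePlace.mk φ).embedding = φ := embedding_mk_eq_of_isReal hφr
    ext x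
    have h1 := embedding_of_isReal_apply (hreal (InfinitePlace.mk φ)) x
    rw [hemb] at h1
    have h2 : ((r (InfinitePlace.mk φ)) x : ℂ) = (σ x : ℂ) := h1
    exact_mod_cast h2
  have hrbij : Function.Bijective r := ⟨hrinj, hrsurj⟩
  -- the key vanishing sum, for every unit
  have hsum : ∀ ε : (𝓞 F)ˣ,
      ∑ w : InfinitePlace F, (a (r w) : ℝ) * Real.log (w (algebraMap (𝓞 F) F (ε : 𝓞 F))) = 0 := by
    intro ε
    set u : F := algebraMap (𝓞 F) F (ε : 𝓞 F) with hu
    have hune : u ≠ 0 := by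
      rw [hu]
      exact (map_ne_zero_iff _ (IsFractionRing.injective (𝓞 F) F)).mpr (Units.ne_zero ε)
    have huσ : ∀ σ : F →+* ℝ, σ u ≠ 0 := fun σ => (map_ne_zero σ).mpr hune
    have hsq : ((ε ^ 2 : (𝓞 F)ˣ) : 𝓞 F) = ((ε : 𝓞 F)) ^ 2 := by push_cast; ring
    have hco : ∀ σ : F →+* ℝ,
        σ (algebraMap (𝓞 F) F ((ε ^ 2 : (𝓞 F)ˣ) : 𝓞 F)) = (σ u) ^ 2 := by
      intro σ
      rw [hsq, map_pow, map_pow, ← hu]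
    have hpos : ∀ σ : F →+* ℝ, 0 < σ (algebraMap (𝓞 F) F ((ε ^ 2 : (𝓞 F)ˣ) : 𝓞 F)) := by
      intro σ
      rw [hco σ]
      exact pow_two_pos_of_ne_zero (huσ σ)
    have hprod := ha (ε ^ 2) hpos
    rw [Finset.prod_congr rfl (fun σ _ => by rw [hco σ])] at hprod
    have hlog := congrArg Real.log hprod
    rw [Real.log_prod (fun σ _ => zpow_ne_zero _ (pow_ne_zero 2 (huσ σ))),
      Real.log_one] at hlog
    have hterm : ∀ σ : F →+* ℝ,
        Real.log ((σ u ^ 2) ^ a σ) = (a σ : ℝ) * (2 * Real.log (σ u)) := by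
      intro σ
      rw [Real.log_zpow, Real.log_pow]
      push_cast; ring
    rw [Finset.sum_congr rfl (fun σ _ => hterm σ)] at hlog
    have hlog2 : ∑ σ : F →+* ℝ, (a σ : ℝ) * Real.log (σ u) = 0 := by
      have h2 : (2 : ℝ) * ∑ σ : F →+* ℝ, (a σ : ℝ) * Real.log (σ u) = 0 := by
        rw [Finset.mul_sum, ← hlog]
        exact Finset.sum_congr rfl fun σ _ => by ring
      linarith
    calc ∑ w : InfinitePlace F, (a (r w) : ℝ) * Real.log (w u)
        = ∑ w : InfinitePlace F, (a (r w) : ℝ) * Real.log (r w u) := by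
          refine Finset.sum_congr rfl fun w _ => ?_
          rw [← hrw w u, Real.log_abs]
      _ = ∑ σ : F →+* ℝ, (a σ : ℝ) * Real.log (σ u) :=
          Fintype.sum_bijective r hrbij _ _ (fun w => rfl)
      _ = 0 := hlog2
  -- the linear functional
  set c : {w : InfinitePlace F // w ≠ w₀} → ℝ :=
    fun w' => (a (r w'.1) : ℝ) - (a (r (w₀ : InfinitePlace F)) : ℝ) with hc
  set L : ({w : InfinitePlace F // w ≠ w₀} → ℝ) →ₗ[ℝ] ℝ :=
    { toFun := fun x => ∑ w', c w' * x w'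
      map_add' := fun x y => by
        simp only [Pi.add_apply, mul_add]
        rw [Finset.sum_add_distrib]
      map_smul' := fun t x => by
        simp only [Pi.smul_apply, smul_eq_mul, RingHom.id_apply]
        rw [Finset.mul_sum]
        exact Finset.sum_congr rfl fun w' _ => by ring } with hL
  have hLlattice : (unitLattice F : Set ({w : InfinitePlace F // w ≠ w₀} → ℝ)) ⊆
      (LinearMap.ker L : Set _) := by
    rintro v ⟨ε, -, rfl⟩
    simp only [SetLike.mem_coe, LinearMap.mem_ker]
    set x : (𝓞 F)ˣ := ε.toMul with hx
    show ∑ w', c w' * ((logEmbedding F) (Additive.ofMul x) w') = 0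
    have hcomp : ∀ w' : {w : InfinitePlace F // w ≠ w₀},
        (logEmbedding F) (Additive.ofMul x) w'
          = Real.log (w'.1 (algebraMap (𝓞 F) F (x : 𝓞 F))) := by
      intro w'
      rw [logEmbedding_component, hmult w'.1, one_mul]
    have hsplit := aux_sum_split F
      (fun w => (a (r w) : ℝ) * Real.log (w (algebraMap (𝓞 F) F (x : 𝓞 F))))
    rw [hsum x] at hsplit
    have hsumne : ∑ w' : {w : InfinitePlace F // w ≠ w₀},
        Real.log (w'.1 (algebraMap (𝓞 F) F (x : 𝓞 F)))
        = - Real.log ((w₀ : InfinitePlace F) (algebraMap (𝓞 F) F (x : 𝓞 F))) := by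
      have h := sum_logEmbedding_component (K := F) x
      calc ∑ w' : {w : InfinitePlace F // w ≠ w₀},
            Real.log (w'.1 (algebraMap (𝓞 F) F (x : 𝓞 F)))
          = ∑ w' : {w : InfinitePlace F // w ≠ w₀},
              (logEmbedding F) (Additive.ofMul x) w' :=
            Finset.sum_congr rfl fun w' _ => (hcomp w').symm
        _ = - mult (w₀ : InfinitePlace F) *
              Real.log ((w₀ : InfinitePlace F) (algebraMap (𝓞 F) F (x : 𝓞 F))) := h
        _ = - Real.log ((w₀ : InfinitePlace F) (algebraMap (𝓞 F) F (x : 𝓞 F))) := by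
            rw [neg_mul, hmult (w₀ : InfinitePlace F), one_mul]
    calc ∑ w', c w' * ((logEmbedding F) (Additive.ofMul x) w')
        = ∑ w' : {w : InfinitePlace F // w ≠ w₀},
          ((a (r w'.1) : ℝ) - (a (r (w₀ : InfinitePlace F)) : ℝ)) *
            Real.log (w'.1 (algebraMap (𝓞 F) F (x : 𝓞 F))) := by
          refine Finset.sum_congr rfl fun w' _ => ?_
          rw [hcomp w', hc]
      _ = (∑ w' : {w : InfinitePlace F // w ≠ w₀},
            (a (r w'.1) : ℝ) * Real.log (w'.1 (algebraMap (𝓞 F) F (x : 𝓞 F))))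
          - (a (r (w₀ : InfinitePlace F)) : ℝ) *
            ∑ w' : {w : InfinitePlace F // w ≠ w₀},
              Real.log (w'.1 (algebraMap (𝓞 F) F (x : 𝓞 F))) := by
          rw [Finset.mul_sum, ← Finset.sum_sub_distrib]
          exact Finset.sum_congr rfl fun w' _ => by ring
      _ = 0 := by
          rw [hsumne]
          have h1 : ∑ w' : {w : InfinitePlace F // w ≠ w₀},
              (a (r w'.1) : ℝ) * Real.log (w'.1 (algebraMap (𝓞 F) F (x : 𝓞 F)))
              = - ((a (r (w₀ : InfinitePlace F)) : ℝ) *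
                Real.log ((w₀ : InfinitePlace F) (algebraMap (𝓞 F) F (x : 𝓞 F)))) := by
            linarith [hsplit]
          rw [h1]; ring
  have hLzero : L = 0 := by
    have h : Submodule.span ℝ (unitLattice F : Set ({w : InfinitePlace F // w ≠ w₀} → ℝ)) ≤
        LinearMap.ker L := Submodule.span_le.mpr hLlattice
    rw [unitLattice_span_eq_top] at h
    apply LinearMap.ext
    intro y
    exact h (Submodule.mem_top (x := y))
  -- conclude that `a ∘ r` is constant
  have hconst : ∀ w : InfinitePlace F, a (r w) = a (r (w₀ : InfinitePlace F)) := by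
    intro w
    by_cases hw : w = w₀
    · rw [hw]
    · have hL1 : L (Pi.single (⟨w, hw⟩ : {w : InfinitePlace F // w ≠ w₀}) 1) = 0 := by
        rw [hLzero]; rfl
      rw [hL] at hL1
      simp only [LinearMap.coe_mk, AddHom.coe_mk] at hL1
      rw [Finset.sum_eq_single (⟨w, hw⟩ : {w : InfinitePlace F // w ≠ w₀})
        (fun b _ hb => by rw [Pi.single_eq_of_ne hb, mul_zero])
        (fun hb => absurd (Finset.mem_univ _) hb)] at hL1
      rw [Pi.single_eq_same, mul_one, hc] at hL1
      have h2 := hL1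
      have h3 : (a (r w) : ℝ) = (a (r (w₀ : InfinitePlace F)) : ℝ) := by
        simp only at h2
        linarith
      exact_mod_cast h3
  intro σ τ
  obtain ⟨wσ, rfl⟩ := hrsurj σ
  obtain ⟨wτ, rfl⟩ := hrsurj τ
  rw [hconst wσ, hconst wτ]
end

section
/- Let p be a prime, S ⊆ ℕ an infinite set, and u = 1 + p. Then the ℤ_p-algebra homomorphism ℤ_p[[X]] → ∏_{k∈S} ℤ_p given by f ↦ (f(u^k − 1))_{k∈S} is injective. -/
open PowerSeries Filter

namespace Stmt13Aux

variable {p : ℕ} [Fact p.Prime]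

/-- Evaluation of a "power series" (given by its coefficients) at a point of `ℤ_p`. -/
noncomputable def F (c : ℕ → ℤ_[p]) (x : ℤ_[p]) : ℤ_[p] :=
  ∑' n : ℕ, c n * x ^ n

lemma summable_aux (c : ℕ → ℤ_[p]) {x : ℤ_[p]} (hx : ‖x‖ < 1) :
    Summable (fun n => c n * x ^ n) := by
  refine Summable.of_norm_bounded
    (summable_geometric_of_lt_one (norm_nonneg x) hx) ?_
  intro n
  rw [norm_mul, norm_pow]
  exact mul_le_of_le_one_left (pow_nonneg (norm_nonneg x) n) (PadicInt.norm_le_one _)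

/-- Root factoring: if `F c a = 0`, then morally `c = (X - a) * e`. -/
lemma factor (c : ℕ → ℤ_[p]) {a : ℤ_[p]} (ha : ‖a‖ < 1) (hfa : F c a = 0) :
    ∃ e : ℕ → ℤ_[p],
      (c 0 = -a * e 0) ∧ (∀ m, c (m+1) = e m - a * e (m+1)) := by
  set e : ℕ → ℤ_[p] := fun m => ∑' i : ℕ, c (m+1+i) * a ^ i with he
  have hsum : ∀ m, Summable (fun i => c (m+1+i) * a ^ i) :=
    fun m => summable_aux _ ha
  have key : ∀ m, e m = c (m+1) + a * e (m+1) := by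
    intro m
    rw [he]
    simp only
    rw [Summable.tsum_eq_zero_add (hsum m), ← Summable.tsum_mul_left a (hsum (m+1))]
    congr 1
    · simp
    · refine tsum_congr (fun i => ?_)
      have h1 : m + 1 + (i + 1) = m + 2 + i := by omega
      have h2 : m + 1 + 1 + i = m + 2 + i := by omega
      rw [h1, h2, pow_succ]; ring
  refine ⟨e, ?_, fun m => by rw [key m]; ring⟩
  have h0 : (0:ℤ_[p]) = c 0 + a * e 0 := by
    rw [← hfa, F, Summable.tsum_eq_zero_add (summable_aux c ha), he]
    simp only
    rw [← Summable.tsum_mul_left a (hsum 0)]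
    congr 1
    · simp
    · refine tsum_congr (fun i => ?_)
      have h1 : 0 + 1 + i = i + 1 := by omega
      rw [h1, pow_succ]; ring
  linear_combination -h0

/-- If `c = (X - a) * e` coefficient-wise, evaluation is multiplicative. -/
lemma eval_factor (c e : ℕ → ℤ_[p]) {a : ℤ_[p]}
    (h0 : c 0 = -a * e 0)
    (hrec : ∀ m, c (m+1) = e m - a * e (m+1))
    {b : ℤ_[p]} (hb : ‖b‖ < 1) : F c b = (b - a) * F e b := by
  have sg : Summable (fun n => e n * b ^ n) := summable_aux _ hb
  have sg' : Summable (fun n => e (n+1) * b ^ (n+1)) := by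
    refine (summable_aux (fun n => e (n+1) * b) hb).congr (fun n => ?_)
    rw [pow_succ]; ring
  have s1 : Summable (fun n => b * (e n * b ^ n)) := sg.mul_left b
  have s2 : Summable (fun n => a * (e (n+1) * b ^ (n+1))) := sg'.mul_left a
  have hshift : ∑' n : ℕ, e (n+1) * b ^ (n+1) = (∑' n : ℕ, e n * b ^ n) - e 0 := by
    rw [Summable.tsum_eq_zero_add sg, pow_zero, mul_one, add_sub_cancel_left]
  simp only [F]
  calc ∑' n : ℕ, c n * b ^ n
      = c 0 * b ^ 0 + ∑' n : ℕ, c (n+1) * b ^ (n+1) := Summable.tsum_eq_zero_add (summable_aux c hb)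
    _ = -a * e 0 + ∑' n : ℕ, (b * (e n * b ^ n) - a * (e (n+1) * b ^ (n+1))) := by
        rw [pow_zero, mul_one, h0]
        congr 1
        refine tsum_congr (fun n => ?_)
        rw [hrec n, pow_succ]; ring
    _ = -a * e 0 + (b * ∑' n : ℕ, e n * b ^ n -
          a * ((∑' n : ℕ, e n * b ^ n) - e 0)) := by
        rw [Summable.tsum_sub s1 s2, Summable.tsum_mul_left b sg, Summable.tsum_mul_left a sg', hshift]
    _ = (b - a) * ∑' n : ℕ, e n * b ^ n := by ring

/-- Main bound: if `c` vanishes at `n` distinct points of norm `≤ r`, then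
`‖c m‖ ≤ r ^ (n - m)`. -/
lemma bound {r : ℝ} (hr0 : 0 ≤ r) (hr1 : r < 1) :
    ∀ (n : ℕ) (c : ℕ → ℤ_[p]) (T : Finset ℤ_[p]), T.card = n →
      (∀ a ∈ T, ‖a‖ ≤ r ∧ F c a = 0) → ∀ m, ‖c m‖ ≤ r ^ (n - m) := by
  classical
  intro n
  induction n with
  | zero => intro c T _ _ m; simpa using PadicInt.norm_le_one _
  | succ n ih =>
    intro c T hT hroots m
    obtain ⟨a, s, has, hins, hs⟩ := Finset.card_eq_succ.mp hT
    subst hins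
    obtain ⟨hanorm, hfa⟩ := hroots a (Finset.mem_insert_self a s)
    obtain ⟨e, h0, hrec⟩ := factor c (lt_of_le_of_lt hanorm hr1) hfa
    have hgroots : ∀ b ∈ s, ‖b‖ ≤ r ∧ F e b = 0 := by
      intro b hb
      obtain ⟨hbnorm, hfb⟩ := hroots b (Finset.mem_insert_of_mem hb)
      refine ⟨hbnorm, ?_⟩
      have heq := eval_factor c e h0 hrec (lt_of_le_of_lt hbnorm hr1)
      rw [hfb] at heq
      rcases mul_eq_zero.mp heq.symm with h | h
      · exact absurd (sub_eq_zero.mp h) (fun hba => has (hba ▸ hb))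
      · exact h
    have ihg := ih e s hs hgroots
    match m with
    | 0 =>
      rw [h0]
      calc ‖-a * e 0‖ = ‖a‖ * ‖e 0‖ := by
            rw [norm_mul, norm_neg]
        _ ≤ r * r ^ (n - 0) := mul_le_mul hanorm (ihg 0) (norm_nonneg _) hr0
        _ = r ^ (n + 1 - 0) := by rw [Nat.sub_zero, Nat.sub_zero, pow_succ]; ring
    | m + 1 =>
      rw [hrec m, sub_eq_add_neg]
      refine le_trans (PadicInt.nonarchimedean _ _) (max_le ?_ ?_)
      · have := ihg m
        simpa [Nat.succ_sub_succ] using this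
      · rw [norm_neg, norm_mul]
        have h1 : ‖a‖ * ‖e (m+1)‖ ≤ r * r ^ (n - (m+1)) :=
          mul_le_mul hanorm (ihg (m+1)) (norm_nonneg _) hr0
        refine le_trans h1 ?_
        rw [Nat.succ_sub_succ]
        rcases le_or_gt (m + 1) n with h | h
        · have hnm : n - (m+1) + 1 = n - m := by omega
          rw [← hnm, pow_succ, mul_comm]
        · have h2 : n - (m+1) = 0 := by omega
          have h3 : n - m = 0 := by omega
          rw [h2, h3, pow_zero, mul_one]
          exact hr1.le

end Stmt13Aux

/-- For `u = 1 + p` and an infinite set `S ⊆ ℕ`, the map sending a power series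
`f ∈ ℤ_p[[X]]` to its values `f(u^k - 1)` for `k ∈ S` is injective. -/
theorem stmt13 (p : ℕ) [Fact p.Prime] (S : Set ℕ) (hS : S.Infinite) :
    Function.Injective (fun f : PowerSeries ℤ_[p] => fun k : S =>
      ∑' n : ℕ, (PowerSeries.coeff (R := ℤ_[p]) n f) * ((1 + p : ℤ_[p]) ^ (k : ℕ) - 1) ^ n) := by
  classical
  intro f1 f2 h
  set u : ℤ_[p] := (1 + p : ℤ_[p]) with hu
  have hp2 : 2 ≤ p := (Fact.out : p.Prime).two_le
  -- norm of roots
  have hnorm : ∀ k : ℕ, ‖u ^ k - 1‖ ≤ ((p:ℝ))⁻¹ := by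
    intro k
    have hgeo : u ^ k - 1 = (∑ i ∈ Finset.range k, u ^ i) * (u - 1) := (geom_sum_mul u k).symm
    rw [hgeo, norm_mul]
    have hup : u - 1 = (p : ℤ_[p]) := by rw [hu]; ring
    rw [hup, PadicInt.norm_p]
    exact mul_le_of_le_one_left (by positivity) (PadicInt.norm_le_one _)
  -- injectivity of k ↦ u^k - 1
  have hinj : Function.Injective (fun k : ℕ => u ^ k - 1) := by
    intro k l hkl
    simp only at hkl
    have h1 : u ^ k = u ^ l := by linear_combination hkl
    have h2 : ((1 + p) ^ k : ℕ) = ((1 + p) ^ l : ℕ) := by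
      have hcast : (((1 + p) ^ k : ℕ) : ℤ_[p]) = (((1 + p) ^ l : ℕ) : ℤ_[p]) := by
        push_cast
        rw [hu] at h1
        convert h1 using 2 <;> ring
      exact_mod_cast hcast
    exact Nat.pow_right_injective (by omega) h2
  set c : ℕ → ℤ_[p] := fun n => PowerSeries.coeff (R := ℤ_[p]) n (f1 - f2) with hc
  set r : ℝ := ((p:ℝ))⁻¹ with hr
  have hr0 : 0 ≤ r := by positivity
  have hr1 : r < 1 := by
    rw [hr]
    apply inv_lt_one_of_one_lt₀
    exact_mod_cast by omega
  have hroots : ∀ k ∈ S, Stmt13Aux.F c (u ^ k - 1) = 0 := by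
    intro k hk
    have hb : ‖u ^ k - 1‖ < 1 := lt_of_le_of_lt (hnorm k) hr1
    have hk' := congrFun h ⟨k, hk⟩
    simp only at hk'
    rw [Stmt13Aux.F]
    have hsub : ∀ n : ℕ, c n * (u ^ k - 1) ^ n =
        (PowerSeries.coeff (R := ℤ_[p]) n f1) * (u ^ k - 1) ^ n -
        (PowerSeries.coeff (R := ℤ_[p]) n f2) * (u ^ k - 1) ^ n := by
      intro n; rw [hc]; simp only [map_sub, sub_mul]
    calc ∑' n : ℕ, c n * (u ^ k - 1) ^ n
        = ∑' n : ℕ, ((PowerSeries.coeff (R := ℤ_[p]) n f1) * (u ^ k - 1) ^ n -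
            (PowerSeries.coeff (R := ℤ_[p]) n f2) * (u ^ k - 1) ^ n) := tsum_congr hsub
      _ = (∑' n : ℕ, (PowerSeries.coeff (R := ℤ_[p]) n f1) * (u ^ k - 1) ^ n) -
          ∑' n : ℕ, (PowerSeries.coeff (R := ℤ_[p]) n f2) * (u ^ k - 1) ^ n :=
          Summable.tsum_sub (Stmt13Aux.summable_aux _ hb) (Stmt13Aux.summable_aux _ hb)
      _ = 0 := by rw [hk', sub_self]
  have hzero : ∀ m, c m = 0 := by
    intro m
    have hle : ∀ j : ℕ, ‖c m‖ ≤ r ^ j := by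
      intro j
      obtain ⟨t, htS, htc⟩ := hS.exists_subset_card_eq (m + j)
      have hTcard : (t.image (fun k => u ^ k - 1)).card = m + j := by
        rw [Finset.card_image_of_injective t hinj, htc]
      have hb := Stmt13Aux.bound hr0 hr1 (m + j) c (t.image (fun k => u ^ k - 1)) hTcard ?_ m
      · have hmj : m + j - m = j := by omega
        rwa [hmj] at hb
      · intro a ha
        obtain ⟨k, hk, rfl⟩ := Finset.mem_image.mp ha
        exact ⟨hnorm k, hroots k (htS hk)⟩
    have h0 : ‖c m‖ ≤ 0 :=
      ge_of_tendsto (tendsto_pow_atTop_nhds_zero_of_lt_one hr0 hr1)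
        (Filter.Eventually.of_forall hle)
    simpa using le_antisymm h0 (norm_nonneg _)
  have hd : f1 - f2 = 0 := by
    ext m
    rw [map_zero]
    exact hzero m
  exact sub_eq_zero.mp hd
end
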